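/- For |z| < 1, the lattice Green's function P(0,0;z) = (1/pi^2) * integral over [0,pi]^2 of dk_1 dk_2/(1 - z cos k_1 cos k_2) equals (2/pi) * K(z^2), where K(m) = integral from 0 to pi/2 of dt / sqrt(1 - m sin^2 t) is the complete elliptic integral of the first kind (with parameter m = modulus squared). -/

import Mathlib

open scoped Real
open Filter Topology intervalIntegral

lemma cos_integral_aux (a : ℝ) (ha : |a| < 1) :
    ∫ x in (0:ℝ)..π, 1 / (1 - a * Real.cos x) = π / Real.sqrt (1 - a ^ 2) := by
  have ha1 : -1 < a := neg_lt_of_abs_lt ha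
  have ha2 : a < 1 := lt_of_abs_lt ha
  have h1a : (0:ℝ) < 1 - a := by linarith
  have h1a' : (0:ℝ) < 1 + a := by linarith
  have hsq : (0:ℝ) < 1 - a ^ 2 := by nlinarith
  set s : ℝ := Real.sqrt (1 - a ^ 2) with hs_def
  have hs : 0 < s := Real.sqrt_pos.mpr hsq
  have hs2 : s ^ 2 = 1 - a ^ 2 := Real.sq_sqrt hsq.le
  set b : ℝ := (1 + a) / s with hb_def
  have hb : 0 < b := div_pos h1a' hs
  -- denominator positivity
  have hden : ∀ x : ℝ, 0 < 1 - a * Real.cos x := by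
    intro x
    have h1 : a * Real.cos x ≤ |a * Real.cos x| := le_abs_self _
    have h2 : |a * Real.cos x| ≤ |a| := by
      rw [abs_mul]
      calc |a| * |Real.cos x| ≤ |a| * 1 := by
            exact mul_le_mul_of_nonneg_left (Real.abs_cos_le_one x) (abs_nonneg a)
        _ = |a| := mul_one _
    linarith
  have hf_cont : Continuous fun x : ℝ => 1 / (1 - a * Real.cos x) :=
    continuous_const.div (by continuity) fun x => (hden x).ne'
  set F : ℝ → ℝ := fun x => (2 / s) * Real.arctan (b * Real.tan (x / 2)) with hF_def
  -- derivative of F on (-π, π)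
  have hderiv : ∀ x ∈ Set.Ioo (-π) π, HasDerivAt F (1 / (1 - a * Real.cos x)) x := by
    intro x hx
    have hx2 : x / 2 ∈ Set.Ioo (-(π/2)) (π/2) := by
      constructor <;> [linarith [hx.1]; linarith [hx.2]]
    have hc : 0 < Real.cos (x / 2) := Real.cos_pos_of_mem_Ioo hx2
    have h1 : HasDerivAt (fun y : ℝ => y / 2) (1/2) x := by
      simpa using (hasDerivAt_id x).div_const 2
    have h2 : HasDerivAt Real.tan (1 / Real.cos (x/2) ^ 2) (x/2) :=
      Real.hasDerivAt_tan hc.ne'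
    have h3 : HasDerivAt (fun y : ℝ => Real.tan (y / 2))
        (1 / Real.cos (x/2) ^ 2 * (1/2)) x := by exact h2.comp x h1
    have h4 := h3.const_mul b
    have h5 : HasDerivAt Real.arctan (1 / (1 + (b * Real.tan (x/2)) ^ 2))
        (b * Real.tan (x/2)) := Real.hasDerivAt_arctan _
    have h6 := (h5.comp x h4).const_mul (2 / s)
    convert h6 using 1
    · rfl
    · rfl
    · rfl
    -- algebraic identity
    set c := Real.cos (x/2) with hc_def
    set T := Real.tan (x/2) with hT_def
    have hcosx : Real.cos x = 2 * c ^ 2 - 1 := by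
      have h := Real.cos_two_mul (x/2)
      rw [show 2 * (x/2) = x by ring] at h
      simpa [hc_def] using h
    have hpyth : Real.sin (x/2) ^ 2 = 1 - c ^ 2 := by
      nlinarith [Real.sin_sq_add_cos_sq (x/2)]
    have hT2 : T ^ 2 = (1 - c ^ 2) / c ^ 2 := by
      rw [hT_def, Real.tan_eq_sin_div_cos, div_pow, hpyth]
    have hb2 : b ^ 2 = (1 + a) / (1 - a) := by
      rw [hb_def, div_pow, hs2]
      rw [show (1:ℝ) - a ^ 2 = (1 + a) * (1 - a) by ring]
      rw [show ((1:ℝ) + a) ^ 2 = (1 + a) * (1 + a) by ring]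
      rw [mul_div_mul_left _ _ h1a'.ne']
    have e1 : 1 + (b * T) ^ 2 = (1 - a * Real.cos x) / ((1 - a) * c ^ 2) := by
      rw [mul_pow, hb2, hT2, hcosx]
      field_simp
      ring
    have e2 : (2 / s) * b = 2 / (1 - a) := by
      rw [hb_def]
      field_simp
      linear_combination (-1 : ℝ) * hs2
    symm
    calc 2 / s * (1 / (1 + (b * T) ^ 2) * (b * (1 / c ^ 2 * (1 / 2))))
        = ((2 / s) * b) * ((1 - a) * c ^ 2 / (1 - a * Real.cos x)) * (1 / (2 * c ^ 2)) := by
          rw [e1, one_div_div]; ring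
      _ = (2 / (1 - a)) * ((1 - a) * c ^ 2 / (1 - a * Real.cos x)) * (1 / (2 * c ^ 2)) := by
          rw [e2]
      _ = 1 / (1 - a * Real.cos x) := by
          field_simp [hc.ne', (hden x).ne', h1a.ne']
  have hF0 : F 0 = 0 := by simp [hF_def]
  -- FTC on [0, y] for y ∈ (0, π)
  have hFTC : ∀ y ∈ Set.Ioo (0:ℝ) π,
      (∫ x in (0:ℝ)..y, 1 / (1 - a * Real.cos x)) = F y := by
    intro y hy
    have : (∫ x in (0:ℝ)..y, 1 / (1 - a * Real.cos x)) = F y - F 0 := by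
      apply intervalIntegral.integral_eq_sub_of_hasDerivAt
      · intro x hx
        rw [Set.uIcc_of_le hy.1.le] at hx
        refine hderiv x ⟨?_, ?_⟩
        · have := hx.1; have := Real.pi_pos; linarith
        · have := hx.2; have := hy.2; linarith
      · exact hf_cont.intervalIntegrable _ _
    rw [this, hF0, sub_zero]
  -- limits
  have hprim : Tendsto (fun y => ∫ x in (0:ℝ)..y, 1 / (1 - a * Real.cos x)) (𝓝[<] π)
      (𝓝 (∫ x in (0:ℝ)..π, 1 / (1 - a * Real.cos x))) :=
    ((intervalIntegral.continuous_primitive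
      (fun _ _ => hf_cont.intervalIntegrable _ _) 0).tendsto π).mono_left nhdsWithin_le_nhds
  have htanlim : Tendsto (fun y : ℝ => Real.tan (y / 2)) (𝓝[<] π) atTop := by
    have hhalf : Tendsto (fun y : ℝ => y / 2) (𝓝[<] π) (𝓝[<] (π/2)) := by
      apply tendsto_nhdsWithin_of_tendsto_nhds_of_eventually_within
      · exact (continuous_id.div_const 2).continuousAt.tendsto.mono_left nhdsWithin_le_nhds
      · filter_upwards [self_mem_nhdsWithin] with y (hy : y < π)
        exact (div_lt_div_iff_of_pos_right two_pos).mpr (by simpa using hy)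
    exact Real.tendsto_tan_pi_div_two.comp hhalf
  have hFlim : Tendsto F (𝓝[<] π) (𝓝 (π / s)) := by
    have h1 : Tendsto (fun y : ℝ => b * Real.tan (y / 2)) (𝓝[<] π) atTop :=
      htanlim.const_mul_atTop hb
    have h2 : Tendsto (fun y : ℝ => Real.arctan (b * Real.tan (y / 2))) (𝓝[<] π)
        (𝓝 (π/2)) :=
      (tendsto_nhds_of_tendsto_nhdsWithin Real.tendsto_arctan_atTop).comp h1
    have h3 := h2.const_mul (2 / s)
    have : (2 / s) * (π / 2) = π / s := by field_simp
    rw [this] at h3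
    exact h3
  have heq : (fun y => ∫ x in (0:ℝ)..y, 1 / (1 - a * Real.cos x)) =ᶠ[𝓝[<] π] F := by
    have hmem : Set.Ioo (0:ℝ) π ∈ 𝓝[<] π := by
      exact Ioo_mem_nhdsLT_of_mem ⟨Real.pi_pos, le_refl π⟩
    filter_upwards [hmem] with y hy using hFTC y hy
  have := tendsto_nhds_unique (hprim.congr' heq) hFlim
  rw [this]

lemma half_integral_aux (c : ℝ) (hc0 : 0 ≤ c) (hc1 : c < 1) :
    ∫ x in (0:ℝ)..π, 1 / Real.sqrt (1 - c * Real.cos x ^ 2) =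
      2 * ∫ t in (0:ℝ)..(π/2), 1 / Real.sqrt (1 - c * Real.sin t ^ 2) := by
  have hpos : ∀ x : ℝ, 0 < 1 - c * Real.cos x ^ 2 := by
    intro x
    nlinarith [Real.cos_sq_le_one x, sq_nonneg (Real.cos x)]
  have hg_cont : Continuous fun x : ℝ => 1 / Real.sqrt (1 - c * Real.cos x ^ 2) :=
    continuous_const.div (Real.continuous_sqrt.comp (by continuity))
      fun x => (Real.sqrt_pos.mpr (hpos x)).ne'
  have hsplit : (∫ x in (0:ℝ)..π, 1 / Real.sqrt (1 - c * Real.cos x ^ 2)) =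
      (∫ x in (0:ℝ)..(π/2), 1 / Real.sqrt (1 - c * Real.cos x ^ 2)) +
      ∫ x in (π/2:ℝ)..π, 1 / Real.sqrt (1 - c * Real.cos x ^ 2) :=
    (intervalIntegral.integral_add_adjacent_intervals
      (hg_cont.intervalIntegrable _ _) (hg_cont.intervalIntegrable _ _)).symm
  have h2 : (∫ x in (π/2:ℝ)..π, 1 / Real.sqrt (1 - c * Real.cos x ^ 2)) =
      ∫ x in (0:ℝ)..(π/2), 1 / Real.sqrt (1 - c * Real.cos x ^ 2) := by
    have := intervalIntegral.integral_comp_sub_left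
      (a := (0:ℝ)) (b := π/2) (fun x => 1 / Real.sqrt (1 - c * Real.cos x ^ 2)) π
    rw [show π - π/2 = π/2 by ring, show π - 0 = π by ring] at this
    rw [← this]
    apply intervalIntegral.integral_congr
    intro x _
    simp [Real.cos_pi_sub]
  have h3 : (∫ x in (0:ℝ)..(π/2), 1 / Real.sqrt (1 - c * Real.cos x ^ 2)) =
      ∫ t in (0:ℝ)..(π/2), 1 / Real.sqrt (1 - c * Real.sin t ^ 2) := by
    have := intervalIntegral.integral_comp_sub_left
      (a := (0:ℝ)) (b := π/2) (fun t => 1 / Real.sqrt (1 - c * Real.sin t ^ 2)) (π/2)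
    rw [show π/2 - π/2 = (0:ℝ) by ring, show π/2 - 0 = π/2 by ring] at this
    rw [← this]
    apply intervalIntegral.integral_congr
    intro x _
    simp [Real.sin_pi_div_two_sub]
  rw [hsplit, h2, h3]
  ring

open scoped Real

/-- The complete elliptic integral of the first kind in the parameter convention:
`K(m) = ∫₀^{π/2} dt/√(1 - m sin²t)`. -/
noncomputable def ellipticK (m : ℝ) : ℝ :=
  ∫ t in (0:ℝ)..(π / 2), 1 / Real.sqrt (1 - m * Real.sin t ^ 2)

/-- For `|z| < 1`, the lattice Green's function of the 2D fcc lattice equals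
`(2/π) K(z²)`. -/
theorem lgf2_eq_ellipticK (z : ℝ) (hz : |z| < 1) :
    (1 / π ^ 2) * (∫ k₁ in (0:ℝ)..π, ∫ k₂ in (0:ℝ)..π,
        1 / (1 - z * Real.cos k₁ * Real.cos k₂)) =
      (2 / π) * ellipticK (z ^ 2) := by
  have hπ : (0:ℝ) < π := Real.pi_pos
  have hz2 : z ^ 2 < 1 := by nlinarith [abs_nonneg z, sq_abs z]
  have hinner : ∀ k₁ : ℝ, (∫ k₂ in (0:ℝ)..π, 1 / (1 - z * Real.cos k₁ * Real.cos k₂)) =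
      π * (1 / Real.sqrt (1 - z ^ 2 * Real.cos k₁ ^ 2)) := by
    intro k₁
    have habs : |z * Real.cos k₁| < 1 := by
      calc |z * Real.cos k₁| = |z| * |Real.cos k₁| := abs_mul _ _
        _ ≤ |z| * 1 := mul_le_mul_of_nonneg_left (Real.abs_cos_le_one k₁) (abs_nonneg z)
        _ = |z| := mul_one _
        _ < 1 := hz
    have h := cos_integral_aux (z * Real.cos k₁) habs
    simp only [mul_assoc] at h ⊢
    rw [h, mul_pow]
    rw [div_eq_mul_one_div]
  rw [intervalIntegral.integral_congr (fun k₁ _ => hinner k₁)]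
  rw [intervalIntegral.integral_const_mul]
  rw [half_integral_aux (z ^ 2) (sq_nonneg z) hz2]
  rw [show ellipticK (z ^ 2) = ∫ t in (0:ℝ)..(π/2), 1 / Real.sqrt (1 - z ^ 2 * Real.sin t ^ 2)
    from rfl]
  field_simp
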